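/- Let d ≥ 1, T ≥ 2, let ψ_1, …, ψ_T ∈ ℝ^d and x_1, …, x_T ∈ ℝ, and define the squared losses ℓ_t(γ) = ½(x_t − ⟨γ, ψ_t⟩)² for γ ∈ ℝ^d. Assume S_t := ∑_{i=1}^t ψ_i ψ_iᵀ is positive definite for every t = 1, …, T, and let λ_min(t) > 0 denote the smallest eigenvalue of (1/t)·S_t. Define the follow-the-leader iterates γ_1 = 0 and γ_t = S_{t−1}⁻¹ · ∑_{i=1}^{t−1} x_i ψ_i for t = 2, …, T+1. Suppose L > 0 is such that for every t = 2, …, T and every point γ on the closed line segment joining γ_t and γ_{t+1}, |x_t − ⟨γ, ψ_t⟩| · ‖ψ_t‖₂ ≤ L. Then for every γ ∈ ℝ^d: ∑_{t=1}^T ℓ_t(γ_t) − ∑_{t=1}^T ℓ_t(γ) ≤ (ℓ_1(γ_1) − ℓ_1(γ_2)) + ∑_{t=2}^T L² / ((t−1) · λ_min(t−1)). -/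

import Mathlib

open Matrix

/-- The Euclidean (ℓ²) norm of a vector in `ℝ^d`. -/
noncomputable def euclNorm {d : ℕ} (v : Fin d → ℝ) : ℝ :=
  ‖(WithLp.equiv 2 (Fin d → ℝ)).symm v‖

lemma euclNorm_sq {d : ℕ} (v : Fin d → ℝ) : euclNorm v ^ 2 = v ⬝ᵥ v := by
  rw [euclNorm, ← real_inner_self_eq_norm_sq]
  simp [PiLp.inner_apply, dotProduct, RCLike.inner_apply, mul_comm]
  rw [EuclideanSpace.norm_sq_eq]; simp [sq]

lemma euclNorm_nonneg {d : ℕ} (v : Fin d → ℝ) : 0 ≤ euclNorm v := norm_nonneg _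

lemma abs_dot_le {d : ℕ} (u v : Fin d → ℝ) : |u ⬝ᵥ v| ≤ euclNorm u * euclNorm v := by
  have := abs_real_inner_le_norm ((WithLp.equiv 2 (Fin d → ℝ)).symm u)
    ((WithLp.equiv 2 (Fin d → ℝ)).symm v)
  simpa [PiLp.inner_apply, dotProduct, RCLike.inner_apply, mul_comm, euclNorm] using this

lemma mulVec_vecMulVec {d : ℕ} (w v : Fin d → ℝ) :
    (vecMulVec w w).mulVec v = (w ⬝ᵥ v) • w := by
  ext i
  simp [vecMulVec, mulVec, dotProduct, Finset.mul_sum, mul_comm, mul_assoc, mul_left_comm]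

lemma quadform_vecMulVec {d : ℕ} (w v : Fin d → ℝ) :
    v ⬝ᵥ (vecMulVec w w).mulVec v = (w ⬝ᵥ v) ^ 2 := by
  rw [mulVec_vecMulVec, dotProduct_smul, smul_eq_mul, dotProduct_comm, sq]

lemma quad_lower_of_spec {d : ℕ} (A : Matrix (Fin d) (Fin d) ℝ) (hA : A.IsHermitian)
    (lam : ℝ) (hlb : ∀ μ ∈ spectrum ℝ A, lam ≤ μ) (v : Fin d → ℝ) :
    lam * (v ⬝ᵥ v) ≤ v ⬝ᵥ A.mulVec v := by
  have halg : (algebraMap ℝ (Matrix (Fin d) (Fin d) ℝ)) lam = lam • 1 :=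
    Algebra.algebraMap_eq_smul_one lam
  have hone : (lam • (1 : Matrix (Fin d) (Fin d) ℝ)).IsHermitian := by
    unfold Matrix.IsHermitian
    simp
  have hB : (A - lam • (1 : Matrix (Fin d) (Fin d) ℝ)).IsHermitian := hA.sub hone
  have hBpsd : (A - lam • (1 : Matrix (Fin d) (Fin d) ℝ)).PosSemidef := by
    refine hB.posSemidef_iff_eigenvalues_nonneg.mpr fun i => (?_ : 0 ≤ hB.eigenvalues i)
    have hmem : hB.eigenvalues i ∈
        spectrum ℝ (A - (algebraMap ℝ (Matrix (Fin d) (Fin d) ℝ)) lam) := by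
      rw [halg]; exact hB.eigenvalues_mem_spectrum_real i
    rw [← spectrum.sub_singleton_eq] at hmem
    obtain ⟨μ, hμ, ν, hν, hsum⟩ := Set.mem_sub.mp hmem
    rw [Set.mem_singleton_iff] at hν
    subst hν
    rw [← hsum]
    linarith [hlb μ hμ]
  have h0 := hBpsd.dotProduct_mulVec_nonneg v
  have hstar : star v = v := rfl
  rw [hstar, sub_mulVec, smul_mulVec, one_mulVec, dotProduct_sub,
    dotProduct_smul, smul_eq_mul, sub_nonneg] at h0
  exact h0

lemma sum_mulVec'' {d : ℕ} (s : Finset ℕ) (M : ℕ → Matrix (Fin d) (Fin d) ℝ) (v : Fin d → ℝ) :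
    (∑ i ∈ s, M i) *ᵥ v = ∑ i ∈ s, M i *ᵥ v := by
  ext j
  simp only [mulVec, dotProduct, Finset.sum_apply, Matrix.sum_apply, Finset.sum_mul]
  rw [Finset.sum_comm]

lemma dot_sum'' {d : ℕ} (s : Finset ℕ) (w : ℕ → Fin d → ℝ) (v : Fin d → ℝ) :
    v ⬝ᵥ (∑ i ∈ s, w i) = ∑ i ∈ s, v ⬝ᵥ w i := by
  simp only [dotProduct, Finset.sum_apply, Finset.mul_sum]
  rw [Finset.sum_comm]

lemma sum_dot'' {d : ℕ} (s : Finset ℕ) (w : ℕ → Fin d → ℝ) (v : Fin d → ℝ) :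
    (∑ i ∈ s, w i) ⬝ᵥ v = ∑ i ∈ s, w i ⬝ᵥ v := by
  simp only [dotProduct, Finset.sum_apply, Finset.sum_mul]
  rw [Finset.sum_comm]

theorem stmt_12 {d : ℕ} (hd : 1 ≤ d) (T : ℕ) (hT : 2 ≤ T)
    (ψ : ℕ → Fin d → ℝ) (x : ℕ → ℝ)
    (ℓ : ℕ → (Fin d → ℝ) → ℝ)
    (hℓ : ∀ t γ, ℓ t γ = (x t - ψ t ⬝ᵥ γ) ^ 2 / 2)
    (S : ℕ → Matrix (Fin d) (Fin d) ℝ)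
    (hSdef : ∀ t, S t = ∑ i ∈ Finset.Icc 1 t, vecMulVec (ψ i) (ψ i))
    (hSpos : ∀ t ∈ Finset.Icc 1 T, (S t).PosDef)
    (lamMin : ℕ → ℝ)
    (hlam : ∀ t ∈ Finset.Icc 1 T,
      IsLeast (spectrum ℝ (((t : ℝ)⁻¹) • S t)) (lamMin t))
    (hlampos : ∀ t ∈ Finset.Icc 1 T, 0 < lamMin t)
    (γs : ℕ → Fin d → ℝ)
    (hγ1 : γs 1 = 0)
    (hγ : ∀ t ∈ Finset.Icc 2 (T + 1),
      γs t = (S (t - 1))⁻¹.mulVec (∑ i ∈ Finset.Icc 1 (t - 1), x i • ψ i))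
    (L : ℝ) (hL : 0 < L)
    (hgrad : ∀ t ∈ Finset.Icc 2 T, ∀ γ ∈ segment ℝ (γs t) (γs (t + 1)),
      |x t - ψ t ⬝ᵥ γ| * euclNorm (ψ t) ≤ L) :
    ∀ γ : Fin d → ℝ,
      ∑ t ∈ Finset.Icc 1 T, ℓ t (γs t) - ∑ t ∈ Finset.Icc 1 T, ℓ t γ ≤
        (ℓ 1 (γs 1) - ℓ 1 (γs 2)) +
          ∑ t ∈ Finset.Icc 2 T, L ^ 2 / (((t : ℝ) - 1) * lamMin (t - 1)) := by
  -- quadratic identity for cumulative loss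
  have hkey : ∀ t ∈ Finset.Icc 1 T, ∀ u : Fin d → ℝ,
      (∑ i ∈ Finset.Icc 1 t, ℓ i u) - (∑ i ∈ Finset.Icc 1 t, ℓ i (γs (t + 1))) =
        (u - γs (t + 1)) ⬝ᵥ (S t) *ᵥ (u - γs (t + 1)) / 2 := by
    intro t ht u
    simp only [Finset.mem_Icc] at ht
    have hγt := hγ (t + 1) (by simp only [Finset.mem_Icc]; omega)
    simp only [Nat.add_sub_cancel] at hγt
    have hpd := hSpos t (by simp only [Finset.mem_Icc]; omega)
    have hSg : S t *ᵥ γs (t + 1) = ∑ i ∈ Finset.Icc 1 t, x i • ψ i := by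
      rw [hγt, mulVec_mulVec, Matrix.mul_nonsing_inv _ hpd.det_pos.ne'.isUnit, one_mulVec]
    have hresidual : ∑ i ∈ Finset.Icc 1 t, (x i - ψ i ⬝ᵥ γs (t + 1)) • ψ i = 0 := by
      have h1 : ∑ i ∈ Finset.Icc 1 t, (x i - ψ i ⬝ᵥ γs (t + 1)) • ψ i
          = (∑ i ∈ Finset.Icc 1 t, x i • ψ i) - S t *ᵥ γs (t + 1) := by
        rw [hSdef, sum_mulVec'', ← Finset.sum_sub_distrib]
        refine Finset.sum_congr rfl fun i _ => ?_
        rw [mulVec_vecMulVec, sub_smul]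
      rw [h1, hSg, sub_self]
    have hres0 : ∑ i ∈ Finset.Icc 1 t,
        (x i - ψ i ⬝ᵥ γs (t + 1)) * (ψ i ⬝ᵥ (u - γs (t + 1))) = 0 := by
      have h2 : ∑ i ∈ Finset.Icc 1 t,
          (x i - ψ i ⬝ᵥ γs (t + 1)) * (ψ i ⬝ᵥ (u - γs (t + 1)))
          = (∑ i ∈ Finset.Icc 1 t, (x i - ψ i ⬝ᵥ γs (t + 1)) • ψ i) ⬝ᵥ (u - γs (t + 1)) := by
        rw [sum_dot'']
        exact Finset.sum_congr rfl fun i _ => by rw [smul_dotProduct, smul_eq_mul]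
      rw [h2, hresidual, zero_dotProduct]
    rw [← Finset.sum_sub_distrib]
    have hexp : ∀ i ∈ Finset.Icc 1 t, ℓ i u - ℓ i (γs (t + 1)) =
        (ψ i ⬝ᵥ (u - γs (t + 1))) ^ 2 / 2
          - (x i - ψ i ⬝ᵥ γs (t + 1)) * (ψ i ⬝ᵥ (u - γs (t + 1))) := by
      intro i _
      rw [hℓ, hℓ, dotProduct_sub]
      ring
    rw [Finset.sum_congr rfl hexp, Finset.sum_sub_distrib, hres0, sub_zero,
      hSdef, sum_mulVec'', dot_sum'', ← Finset.sum_div]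
    congr 1
    exact Finset.sum_congr rfl fun i _ => by rw [quadform_vecMulVec]
  -- minimality of FTL iterates
  have hmin : ∀ t ∈ Finset.Icc 1 T, ∀ u : Fin d → ℝ,
      (∑ i ∈ Finset.Icc 1 t, ℓ i (γs (t + 1))) ≤ ∑ i ∈ Finset.Icc 1 t, ℓ i u := by
    intro t ht u
    have h := hkey t ht u
    have hpsd := (hSpos t ht).posSemidef
    have := hpsd.dotProduct_mulVec_nonneg (u - γs (t + 1))
    have hstar : star (u - γs (t + 1)) = u - γs (t + 1) := rfl
    rw [hstar] at this
    nlinarith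
  -- quadratic lower bound from smallest eigenvalue
  have hσ : ∀ t ∈ Finset.Icc 1 T, ∀ v : Fin d → ℝ,
      (t : ℝ) * lamMin t * (v ⬝ᵥ v) ≤ v ⬝ᵥ S t *ᵥ v := by
    intro t ht v
    simp only [Finset.mem_Icc] at ht
    have htpos : (0 : ℝ) < (t : ℝ) := by exact_mod_cast Nat.lt_of_lt_of_le Nat.zero_lt_one ht.1
    have hherm : (S t).IsHermitian := (hSpos t (by simp only [Finset.mem_Icc]; omega)).1
    have hA : (((t : ℝ)⁻¹) • S t).IsHermitian := by
      unfold Matrix.IsHermitian at hherm ⊢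
      rw [conjTranspose_smul, hherm]
      congr 1
    have h := quad_lower_of_spec _ hA (lamMin t)
      (fun μ hμ => (hlam t (by simp only [Finset.mem_Icc]; omega)).2 hμ) v
    rw [smul_mulVec, dotProduct_smul, smul_eq_mul] at h
    calc (t : ℝ) * lamMin t * (v ⬝ᵥ v) = (t : ℝ) * (lamMin t * (v ⬝ᵥ v)) := by ring
      _ ≤ (t : ℝ) * ((t : ℝ)⁻¹ * (v ⬝ᵥ S t *ᵥ v)) := mul_le_mul_of_nonneg_left h htpos.le
      _ = v ⬝ᵥ S t *ᵥ v := by field_simp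
  -- per-step bound
  have hstep : ∀ t ∈ Finset.Icc 2 T,
      ℓ t (γs t) - ℓ t (γs (t + 1)) ≤ L ^ 2 / (((t : ℝ) - 1) * lamMin (t - 1)) := by
    intro t ht
    simp only [Finset.mem_Icc] at ht
    set a := γs t with ha
    set b := γs (t + 1) with hb
    set Δ : Fin d → ℝ := b - a with hΔ
    set N := euclNorm Δ with hN
    set σ : ℝ := ((t - 1 : ℕ) : ℝ) * lamMin (t - 1) with hσdef
    have ht1T : t - 1 ∈ Finset.Icc 1 T := by simp only [Finset.mem_Icc]; omega
    have htT : t ∈ Finset.Icc 1 T := by simp only [Finset.mem_Icc]; omega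
    have hσpos : 0 < σ := by
      apply mul_pos _ (hlampos _ ht1T)
      have : 1 ≤ t - 1 := by omega
      exact_mod_cast Nat.lt_of_lt_of_le Nat.zero_lt_one this
    -- upper bound D ≤ L * N via midpoint
    have hmid_mem : (1/2 : ℝ) • a + (1/2 : ℝ) • b ∈ segment ℝ a b :=
      ⟨1/2, 1/2, by norm_num, by norm_num, by norm_num, rfl⟩
    have hgradm := hgrad t (by simp only [Finset.mem_Icc]; omega) _ hmid_mem
    have hDeq : ℓ t a - ℓ t b
        = (x t - ψ t ⬝ᵥ ((1/2 : ℝ) • a + (1/2 : ℝ) • b)) * (ψ t ⬝ᵥ Δ) := by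
      rw [hℓ, hℓ, hΔ, dotProduct_sub, dotProduct_add, dotProduct_smul, dotProduct_smul,
        smul_eq_mul, smul_eq_mul]
      ring
    have hub : ℓ t a - ℓ t b ≤ L * N := by
      rw [hDeq]
      calc (x t - ψ t ⬝ᵥ ((1/2 : ℝ) • a + (1/2 : ℝ) • b)) * (ψ t ⬝ᵥ Δ)
          ≤ |x t - ψ t ⬝ᵥ ((1/2 : ℝ) • a + (1/2 : ℝ) • b)| * |ψ t ⬝ᵥ Δ| := by
            rw [← abs_mul]; exact le_abs_self _
        _ ≤ |x t - ψ t ⬝ᵥ ((1/2 : ℝ) • a + (1/2 : ℝ) • b)| * (euclNorm (ψ t) * N) := by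
            apply mul_le_mul_of_nonneg_left _ (abs_nonneg _)
            exact abs_dot_le _ _
        _ ≤ L * N := by
            rw [← mul_assoc]
            exact mul_le_mul_of_nonneg_right hgradm (euclNorm_nonneg _)
    -- lower bound σ N^2 ≤ D
    have ht1succ : t - 1 + 1 = t := by omega
    have hA1 : (∑ i ∈ Finset.Icc 1 (t - 1), ℓ i b) - (∑ i ∈ Finset.Icc 1 (t - 1), ℓ i a) =
        Δ ⬝ᵥ S (t - 1) *ᵥ Δ / 2 := by
      have := hkey (t - 1) ht1T b
      rw [ht1succ] at this
      exact this
    have hA2 : (∑ i ∈ Finset.Icc 1 t, ℓ i a) - (∑ i ∈ Finset.Icc 1 t, ℓ i b) =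
        Δ ⬝ᵥ S t *ᵥ Δ / 2 := by
      have := hkey t htT a
      have hneg : a - b = -Δ := by rw [hΔ]; abel
      rw [hneg, neg_dotProduct, mulVec_neg, dotProduct_neg, neg_neg] at this
      exact this
    have hsplit : ∀ u : Fin d → ℝ, ∑ i ∈ Finset.Icc 1 t, ℓ i u
        = (∑ i ∈ Finset.Icc 1 (t - 1), ℓ i u) + ℓ t u := by
      intro u
      have h := Finset.sum_Icc_succ_top (a := 1) (b := t - 1) (by omega) (fun i => ℓ i u)
      rw [ht1succ] at h
      exact h
    have hSmono : Δ ⬝ᵥ S (t - 1) *ᵥ Δ ≤ Δ ⬝ᵥ S t *ᵥ Δ := by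
      have hst : S t = S (t - 1) + vecMulVec (ψ t) (ψ t) := by
        have h := Finset.sum_Icc_succ_top (a := 1) (b := t - 1) (by omega)
          (fun i => vecMulVec (ψ i) (ψ i))
        rw [ht1succ] at h
        rw [hSdef, hSdef, h]
      rw [hst, add_mulVec, dotProduct_add, quadform_vecMulVec]
      nlinarith [sq_nonneg (ψ t ⬝ᵥ Δ)]
    have hlow : σ * N ^ 2 ≤ ℓ t a - ℓ t b := by
      have hD : ℓ t a - ℓ t b
          = Δ ⬝ᵥ S t *ᵥ Δ / 2 + Δ ⬝ᵥ S (t - 1) *ᵥ Δ / 2 := by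
        have e1 := hA1
        have e2 := hA2
        rw [hsplit a, hsplit b] at e2
        linarith
      have hq := hσ (t - 1) ht1T Δ
      rw [← hσdef] at hq
      rw [hD, hN, euclNorm_sq]
      linarith
    -- combine
    have hN0 : 0 ≤ N := euclNorm_nonneg _
    have hσN : σ * N ≤ L := by
      rcases eq_or_lt_of_le hN0 with h0 | hpos
      · rw [← h0]; simpa using hL.le
      · nlinarith
    have hfinal : ℓ t a - ℓ t b ≤ L ^ 2 / σ := by
      rw [le_div_iff₀ hσpos]
      nlinarith
    have hcast : (((t : ℝ) - 1) * lamMin (t - 1)) = σ := by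
      rw [hσdef]
      congr 1
      have : ((t - 1 : ℕ) : ℝ) = (t : ℝ) - 1 := by
        have : 1 ≤ t := by omega
        push_cast [Nat.cast_sub this]
        ring
      rw [this]
    rw [hcast]
    exact hfinal
  -- be-the-leader induction
  have hBTL : ∀ n, 1 ≤ n → n ≤ T →
      (∑ t ∈ Finset.Icc 1 n, ℓ t (γs (t + 1))) ≤ ∑ t ∈ Finset.Icc 1 n, ℓ t (γs (n + 1)) := by
    intro n
    induction n with
    | zero => omega
    | succ m ih =>
      intro _ hmT
      rcases Nat.eq_or_lt_of_le (Nat.one_le_iff_ne_zero.mpr (Nat.succ_ne_zero m)) with h1 | h1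
      · have hm0 : m = 0 := by omega
        subst hm0
        simp
      · have hm1 : 1 ≤ m := by omega
        have hmT' : m ≤ T := by omega
        have := ih hm1 hmT'
        rw [Finset.sum_Icc_succ_top (by omega : 1 ≤ m + 1),
            Finset.sum_Icc_succ_top (by omega : 1 ≤ m + 1)]
        have hminm := hmin m (by simp only [Finset.mem_Icc]; omega) (γs (m + 1 + 1))
        linarith
  intro γ
  have hcomp : (∑ t ∈ Finset.Icc 1 T, ℓ t (γs (t + 1))) ≤ ∑ t ∈ Finset.Icc 1 T, ℓ t γ := by
    have h1 := hBTL T (by omega) le_rfl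
    have h2 := hmin T (by simp only [Finset.mem_Icc]; omega) γ
    linarith
  have hsplitsum : ∑ t ∈ Finset.Icc 1 T, (ℓ t (γs t) - ℓ t (γs (t + 1)))
      = (ℓ 1 (γs 1) - ℓ 1 (γs 2)) +
        ∑ t ∈ Finset.Icc 2 T, (ℓ t (γs t) - ℓ t (γs (t + 1))) := by
    have hIcc : Finset.Icc 1 T = insert 1 (Finset.Icc 2 T) := by
      ext a
      simp only [Finset.mem_Icc, Finset.mem_insert]
      omega
    rw [hIcc, Finset.sum_insert (by simp)]
  have hsum2 : ∑ t ∈ Finset.Icc 2 T, (ℓ t (γs t) - ℓ t (γs (t + 1)))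
      ≤ ∑ t ∈ Finset.Icc 2 T, L ^ 2 / (((t : ℝ) - 1) * lamMin (t - 1)) :=
    Finset.sum_le_sum hstep
  have hmain : ∑ t ∈ Finset.Icc 1 T, ℓ t (γs t) - ∑ t ∈ Finset.Icc 1 T, ℓ t (γs (t + 1))
      = ∑ t ∈ Finset.Icc 1 T, (ℓ t (γs t) - ℓ t (γs (t + 1))) := by
    rw [Finset.sum_sub_distrib]
  linarith [hcomp, hsum2, hmain ▸ hsplitsum]
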